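/- If C is an exact category and X is a Birkhoff subcategory of C (a full replete reflective subcategory closed under subobjects and regular quotients), then X is an exact category. -/

import Mathlib

open CategoryTheory CategoryTheory.Limits

universe v u v' u'

variable {C : Type u} [Category.{v} C]

/-- An internal relation on an object `X`: a pair of jointly monic morphisms. -/
structure RelOn (X : C) where
  R : C
  r1 : R ⟶ X
  r2 : R ⟶ X
  jmono : ∀ {Z : C} (f g : Z ⟶ R), f ≫ r1 = g ≫ r1 → f ≫ r2 = g ≫ r2 → f = g

namespace RelOn

variable {X : C} (ρ : RelOn X)

def Reflexive : Prop :=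
  ∃ δ : X ⟶ ρ.R, δ ≫ ρ.r1 = 𝟙 X ∧ δ ≫ ρ.r2 = 𝟙 X

def Symmetric : Prop :=
  ∃ σ : ρ.R ⟶ ρ.R, σ ≫ ρ.r1 = ρ.r2 ∧ σ ≫ ρ.r2 = ρ.r1

/-- Transitivity, formulated with generalized elements. -/
def Transitive : Prop :=
  ∀ {Z : C} (a b : Z ⟶ ρ.R), a ≫ ρ.r2 = b ≫ ρ.r1 →
    ∃ t : Z ⟶ ρ.R, t ≫ ρ.r1 = a ≫ ρ.r1 ∧ t ≫ ρ.r2 = b ≫ ρ.r2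

def IsEquivalence : Prop := ρ.Reflexive ∧ ρ.Symmetric ∧ ρ.Transitive

/-- The relation is effective: it is the kernel pair of some morphism. -/
def Effective : Prop :=
  ∃ (Y : C) (f : X ⟶ Y) (h : ρ.r1 ≫ f = ρ.r2 ≫ f),
    Nonempty (IsLimit (PullbackCone.mk ρ.r1 ρ.r2 h))

end RelOn

/-- A Mal'tsev category: every internal reflexive relation is an equivalence relation. -/
class MaltsevCat (C : Type u) [Category.{v} C] : Prop where
  refl_is_equiv : ∀ {X : C} (ρ : RelOn X), ρ.Reflexive → ρ.Symmetric ∧ ρ.Transitive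

/-- A regular category: finitely complete, coequalizers of kernel pairs,
pullback-stable regular epimorphisms. -/
class RegularCat (C : Type u) [Category.{v} C] : Prop where
  hasFiniteLimits : HasFiniteLimits C
  hasCoeqOfKernelPair : ∀ {A B R : C} (f : A ⟶ B) (p1 p2 : R ⟶ A) (h : p1 ≫ f = p2 ≫ f),
    Nonempty (IsLimit (PullbackCone.mk p1 p2 h)) → HasCoequalizer p1 p2
  regEpiStable : ∀ {P A B Z : C} (f : A ⟶ B) (g : Z ⟶ B) (p1 : P ⟶ A) (p2 : P ⟶ Z)
    (h : p1 ≫ f = p2 ≫ g), Nonempty (IsLimit (PullbackCone.mk p1 p2 h)) →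
    Nonempty (RegularEpi f) → Nonempty (RegularEpi p2)

/-- A Barr-exact category: regular and every equivalence relation is effective. -/
class ExactCat (C : Type u) [Category.{v} C] extends RegularCat C : Prop where
  effective : ∀ {X : C} (ρ : RelOn X), ρ.IsEquivalence → ρ.Effective

/-- An internal reflexive graph. -/
structure ReflexiveGraph (C : Type u) [Category.{v} C] where
  C1 : C
  C0 : C
  d : C1 ⟶ C0
  c : C1 ⟶ C0
  e : C0 ⟶ C1
  ed : e ≫ d = 𝟙 C0
  ec : e ≫ c = 𝟙 C0

/-- An internal category structure on a reflexive graph, formulated via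
generalized elements (equivalent to the usual pullback formulation in a
finitely complete category). `comp a b _` is the composite "`a` followed by `b`". -/
structure CatStruct {C : Type u} [Category.{v} C] (G : ReflexiveGraph C) where
  comp : ∀ {Z : C} (a b : Z ⟶ G.C1), a ≫ G.c = b ≫ G.d → (Z ⟶ G.C1)
  comp_natural : ∀ {W Z : C} (w : W ⟶ Z) (a b : Z ⟶ G.C1) (h : a ≫ G.c = b ≫ G.d)
      (h' : (w ≫ a) ≫ G.c = (w ≫ b) ≫ G.d),
      w ≫ comp a b h = comp (w ≫ a) (w ≫ b) h'
  comp_d : ∀ {Z : C} (a b : Z ⟶ G.C1) (h : a ≫ G.c = b ≫ G.d), comp a b h ≫ G.d = a ≫ G.d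
  comp_c : ∀ {Z : C} (a b : Z ⟶ G.C1) (h : a ≫ G.c = b ≫ G.d), comp a b h ≫ G.c = b ≫ G.c
  comp_unit_l : ∀ {Z : C} (a : Z ⟶ G.C1) (h : (a ≫ G.d ≫ G.e) ≫ G.c = a ≫ G.d),
      comp (a ≫ G.d ≫ G.e) a h = a
  comp_unit_r : ∀ {Z : C} (a : Z ⟶ G.C1) (h : a ≫ G.c = (a ≫ G.c ≫ G.e) ≫ G.d),
      comp a (a ≫ G.c ≫ G.e) h = a
  comp_assoc : ∀ {Z : C} (a b c' : Z ⟶ G.C1) (h1 : a ≫ G.c = b ≫ G.d)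
      (h2 : b ≫ G.c = c' ≫ G.d)
      (h3 : comp a b h1 ≫ G.c = c' ≫ G.d)
      (h4 : a ≫ G.c = comp b c' h2 ≫ G.d),
      comp (comp a b h1) c' h3 = comp a (comp b c' h2) h4

/-- The internal category has inverses, i.e. is an internal groupoid. -/
def CatStruct.HasInverses {C : Type u} [Category.{v} C] {G : ReflexiveGraph C}
    (S : CatStruct G) : Prop :=
  ∃ i : G.C1 ⟶ G.C1, i ≫ G.d = G.c ∧ i ≫ G.c = G.d ∧
    (∀ {Z : C} (a : Z ⟶ G.C1) (h : a ≫ G.c = (a ≫ i) ≫ G.d),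
      S.comp a (a ≫ i) h = a ≫ G.d ≫ G.e) ∧
    (∀ {Z : C} (a : Z ⟶ G.C1) (h : (a ≫ i) ≫ G.c = a ≫ G.d),
      S.comp (a ≫ i) a h = a ≫ G.c ≫ G.e)

/-- An internal groupoid. -/
structure GroupoidObj (C : Type u) [Category.{v} C] where
  graph : ReflexiveGraph C
  str : CatStruct graph
  hasInv : str.HasInverses

/-- Internal functors between internal groupoids. -/
@[ext]
structure GrpdHom (A B : GroupoidObj C) where
  f0 : A.graph.C0 ⟶ B.graph.C0
  f1 : A.graph.C1 ⟶ B.graph.C1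
  hd : f1 ≫ B.graph.d = A.graph.d ≫ f0
  hc : f1 ≫ B.graph.c = A.graph.c ≫ f0
  he : A.graph.e ≫ f1 = f0 ≫ B.graph.e
  hm : ∀ {Z : C} (a b : Z ⟶ A.graph.C1) (h : a ≫ A.graph.c = b ≫ A.graph.d)
      (h' : (a ≫ f1) ≫ B.graph.c = (b ≫ f1) ≫ B.graph.d),
      A.str.comp a b h ≫ f1 = B.str.comp (a ≫ f1) (b ≫ f1) h'

lemma GrpdHom.cond {A B : GroupoidObj C} (f : GrpdHom A B) {Z : C} {a b : Z ⟶ A.graph.C1}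
    (h : a ≫ A.graph.c = b ≫ A.graph.d) :
    (a ≫ f.f1) ≫ B.graph.c = (b ≫ f.f1) ≫ B.graph.d := by
  rw [Category.assoc, f.hc, Category.assoc, f.hd, ← Category.assoc, h, Category.assoc]

def GrpdHom.id (A : GroupoidObj C) : GrpdHom A A where
  f0 := 𝟙 _
  f1 := 𝟙 _
  hd := by simp
  hc := by simp
  he := by simp
  hm := by intros; simp

def GrpdHom.comp {A B D : GroupoidObj C} (f : GrpdHom A B) (g : GrpdHom B D) : GrpdHom A D where
  f0 := f.f0 ≫ g.f0
  f1 := f.f1 ≫ g.f1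
  hd := by rw [Category.assoc, g.hd, ← Category.assoc, f.hd, Category.assoc]
  hc := by rw [Category.assoc, g.hc, ← Category.assoc, f.hc, Category.assoc]
  he := by rw [← Category.assoc, f.he, Category.assoc, g.he, ← Category.assoc]
  hm := by
    intro Z a b h h'
    rw [← Category.assoc, f.hm a b h (f.cond h), g.hm _ _ (f.cond h) (g.cond (f.cond h))]
    simp only [Category.assoc]

instance : Category (GroupoidObj C) where
  Hom := GrpdHom
  id := GrpdHom.id
  comp := GrpdHom.comp
  id_comp f := by apply GrpdHom.ext <;> simp [GrpdHom.comp, GrpdHom.id]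
  comp_id f := by apply GrpdHom.ext <;> simp [GrpdHom.comp, GrpdHom.id]
  assoc f g h := by apply GrpdHom.ext <;> simp [GrpdHom.comp]

/-- Coerce a morphism of internal groupoids to its underlying data. -/
def homToGrpdHom {A B : GroupoidObj C} (f : A ⟶ B) : GrpdHom A B := f

/-- Morphisms of reflexive graphs. -/
@[ext]
structure RGHom (A B : ReflexiveGraph C) where
  f0 : A.C0 ⟶ B.C0
  f1 : A.C1 ⟶ B.C1
  hd : f1 ≫ B.d = A.d ≫ f0
  hc : f1 ≫ B.c = A.c ≫ f0
  he : A.e ≫ f1 = f0 ≫ B.e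

instance : Category (ReflexiveGraph C) where
  Hom := RGHom
  id A := ⟨𝟙 _, 𝟙 _, by simp, by simp, by simp⟩
  comp f g := ⟨f.f0 ≫ g.f0, f.f1 ≫ g.f1,
    by rw [Category.assoc, g.hd, ← Category.assoc, f.hd, Category.assoc],
    by rw [Category.assoc, g.hc, ← Category.assoc, f.hc, Category.assoc],
    by rw [← Category.assoc, f.he, Category.assoc, g.he, ← Category.assoc]⟩
  id_comp f := by apply RGHom.ext <;> simp
  comp_id f := by apply RGHom.ext <;> simp
  assoc f g h := by apply RGHom.ext <;> simp

def homToRGHom {A B : ReflexiveGraph C} (f : A ⟶ B) : RGHom A B := f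

/-- The forgetful functor from internal groupoids to reflexive graphs. -/
def forgetToRG (C : Type u) [Category.{v} C] : GroupoidObj C ⥤ ReflexiveGraph C where
  obj A := A.graph
  map f := ⟨(homToGrpdHom f).f0, (homToGrpdHom f).f1, (homToGrpdHom f).hd,
    (homToGrpdHom f).hc, (homToGrpdHom f).he⟩
  map_id A := by apply RGHom.ext <;> rfl
  map_comp f g := by apply RGHom.ext <;> rfl

/-- A discrete internal groupoid: the unit is an isomorphism. -/
def GroupoidObj.IsDiscrete (A : GroupoidObj C) : Prop := IsIso A.graph.e

/-- An internal double groupoid (an internal groupoid in internal groupoids) is a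
2-groupoid when its groupoid of objects is discrete. -/
def Is2Grpd (D : GroupoidObj (GroupoidObj C)) : Prop := D.graph.C0.IsDiscrete

/-- Zero morphisms, defined without extra structure: morphisms factoring through a
zero object. -/
def IsZeroMor {A B : C} (f : A ⟶ B) : Prop :=
  ∃ (Z : C) (_ : IsZero Z) (g : A ⟶ Z) (h : Z ⟶ B), f = g ≫ h

/-- `κ` is a kernel of `α`. -/
def IsKernelOf {A B K : C} (κ : K ⟶ A) (α : A ⟶ B) : Prop :=
  IsZeroMor (κ ≫ α) ∧ ∀ {Z : C} (g : Z ⟶ A), IsZeroMor (g ≫ α) → ∃! l : Z ⟶ K, l ≫ κ = g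

/-- A split extension with kernel object `Xo`. -/
structure SplitExtOn (Xo : C) where
  A : C
  B : C
  κ : Xo ⟶ A
  α : A ⟶ B
  β : B ⟶ A
  split : β ≫ α = 𝟙 B
  ker : IsKernelOf κ α

/-- A generic split extension with kernel `Xo`: terminal among split extensions
with kernel `Xo` (morphisms being the identity on the kernel). -/
def IsGenericSplitExt {Xo : C} (E : SplitExtOn Xo) : Prop :=
  ∀ E' : SplitExtOn Xo, ∃! vw : (E'.A ⟶ E.A) × (E'.B ⟶ E.B),
    E'.κ ≫ vw.1 = E.κ ∧ vw.1 ≫ E.α = E'.α ≫ vw.2 ∧ E'.β ≫ vw.1 = vw.2 ≫ E.β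

/-- Action representability: every object admits a generic split extension. -/
def ActionRepresentable (C : Type u) [Category.{v} C] : Prop :=
  ∀ X : C, ∃ E : SplitExtOn X, IsGenericSplitExt E

/-- A protoadditive functor: preserves kernels of split epimorphisms. -/
def Protoadditive {X : Type u'} [Category.{v'} X] (H : X ⥤ C) : Prop :=
  ∀ {A B K : X} (α : A ⟶ B) (β : B ⟶ A), β ≫ α = 𝟙 B →
    ∀ (κ : K ⟶ A), IsKernelOf κ α → IsKernelOf (H.map κ) (H.map α)

/-- A semi-abelian category: pointed, Barr-exact, protomodular (split short five
lemma), with binary coproducts. -/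
class SemiAbelian (C : Type u) [Category.{v} C] extends ExactCat C : Prop where
  hasZeroObject : HasZeroObject C
  hasBinaryCoproducts : HasBinaryCoproducts C
  ssfl : ∀ {A B B' Co : C} (k : A ⟶ B) (p : B ⟶ Co) (s : Co ⟶ B)
      (k' : A ⟶ B') (p' : B' ⟶ Co) (s' : Co ⟶ B') (b : B ⟶ B'),
      s ≫ p = 𝟙 Co → s' ≫ p' = 𝟙 Co → IsKernelOf k p → IsKernelOf k' p' →
      k ≫ b = k' → b ≫ p' = p → s ≫ b = s' → IsIso b

/-- A natural Mal'tsev operation on a category with binary products. -/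
def IsNaturallyMaltsev (C : Type u) [Category.{v} C] [HasBinaryProducts C] : Prop :=
  ∃ p : ∀ A : C, (A ⨯ A) ⨯ A ⟶ A,
    (∀ {A B : C} (f : A ⟶ B), prod.map (prod.map f f) f ≫ p B = p A ≫ f) ∧
    (∀ A : C, prod.lift (prod.lift prod.fst prod.snd) prod.snd ≫ p A
        = (prod.fst : A ⨯ A ⟶ A)) ∧
    (∀ A : C, prod.lift (prod.lift prod.fst prod.fst) prod.snd ≫ p A
        = (prod.snd : A ⨯ A ⟶ A))


namespace Stmt6Aux


/-- Elementwise universal property extracted from a pullback cone limit. -/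
lemma pc_elements {A B D R : C} {f : A ⟶ B} {g : D ⟶ B} {p1 : R ⟶ A} {p2 : R ⟶ D}
    {h : p1 ≫ f = p2 ≫ g} (hl : IsLimit (PullbackCone.mk p1 p2 h))
    {Z : C} (a : Z ⟶ A) (b : Z ⟶ D) (hab : a ≫ f = b ≫ g) :
    ∃! l : Z ⟶ R, l ≫ p1 = a ∧ l ≫ p2 = b := by
  refine ⟨PullbackCone.IsLimit.lift hl a b hab, ⟨?_, ?_⟩, ?_⟩
  · exact PullbackCone.IsLimit.lift_fst hl a b hab
  · exact PullbackCone.IsLimit.lift_snd hl a b hab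
  · rintro l' ⟨h1, h2⟩
    apply PullbackCone.IsLimit.hom_ext hl
    · exact h1.trans (PullbackCone.IsLimit.lift_fst hl a b hab).symm
    · exact h2.trans (PullbackCone.IsLimit.lift_snd hl a b hab).symm

/-- Build a pullback cone limit from the elementwise universal property. -/
noncomputable def pc_mk {A B D R : C} {f : A ⟶ B} {g : D ⟶ B} {p1 : R ⟶ A} {p2 : R ⟶ D}
    (h : p1 ≫ f = p2 ≫ g)
    (H : ∀ {Z : C} (a : Z ⟶ A) (b : Z ⟶ D), a ≫ f = b ≫ g →
      ∃! l : Z ⟶ R, l ≫ p1 = a ∧ l ≫ p2 = b) :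
    IsLimit (PullbackCone.mk p1 p2 h) := by
  refine PullbackCone.IsLimit.mk h (fun s => (H s.fst s.snd s.condition).exists.choose)
    (fun s => (H s.fst s.snd s.condition).exists.choose_spec.1)
    (fun s => (H s.fst s.snd s.condition).exists.choose_spec.2)
    (fun s m h1 h2 => ?_)
  have hu := (H s.fst s.snd s.condition).unique (y₁ := m)
    (y₂ := (H s.fst s.snd s.condition).exists.choose)
  exact hu ⟨h1, h2⟩ (H s.fst s.snd s.condition).exists.choose_spec

lemma cofork_elements {A B Q : C} {f g : A ⟶ B} {π : B ⟶ Q} {w : f ≫ π = g ≫ π}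
    (hc : IsColimit (Cofork.ofπ π w)) {Z : C} (k : B ⟶ Z) (hk : f ≫ k = g ≫ k) :
    ∃! d : Q ⟶ Z, π ≫ d = k := by
  refine ⟨Cofork.IsColimit.desc hc k hk, Cofork.IsColimit.π_desc' hc k hk, fun d' hd' => ?_⟩
  apply Cofork.IsColimit.hom_ext hc
  simpa using hd'.trans (Cofork.IsColimit.π_desc' hc k hk).symm

noncomputable def cofork_mk {A B Q : C} {f g : A ⟶ B} {π : B ⟶ Q} (w : f ≫ π = g ≫ π)
    (H : ∀ {Z : C} (k : B ⟶ Z), f ≫ k = g ≫ k → ∃! d : Q ⟶ Z, π ≫ d = k) :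
    IsColimit (Cofork.ofπ π w) := by
  refine Cofork.IsColimit.mk _ (fun s => (H s.π s.condition).exists.choose)
    (fun s => (H s.π s.condition).exists.choose_spec) (fun s m hm => ?_)
  exact (H s.π s.condition).unique hm (H s.π s.condition).exists.choose_spec

variable {P : C → Prop} [Reflective (ObjectProperty.ι P)]

lemma unit_factor {Z : C} {A : ObjectProperty.FullSubcategory P} (a : Z ⟶ A.obj) :
    ∃ a' : (reflector (ObjectProperty.ι P)).obj Z ⟶ A,
      (reflectorAdjunction (ObjectProperty.ι P)).unit.app Z ≫ a'.hom = a := by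
  refine ⟨((reflectorAdjunction (ObjectProperty.ι P)).homEquiv Z A).symm a, ?_⟩
  have := ((reflectorAdjunction (ObjectProperty.ι P)).homEquiv Z A).apply_symm_apply a
  rw [Adjunction.homEquiv_unit] at this
  exact this

lemma unit_cancel {Z : C} {A : ObjectProperty.FullSubcategory P}
    {u v : (reflector (ObjectProperty.ι P)).obj Z ⟶ A}
    (h : (reflectorAdjunction (ObjectProperty.ι P)).unit.app Z ≫ u.hom
       = (reflectorAdjunction (ObjectProperty.ι P)).unit.app Z ≫ v.hom) :
    u = v := by
  apply ((reflectorAdjunction (ObjectProperty.ι P)).homEquiv Z A).injective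
  rw [Adjunction.homEquiv_unit, Adjunction.homEquiv_unit]
  exact h

/-- Elementwise universal property in `C` of a pullback cone that is a limit in the
full subcategory. -/
lemma pb_elements_up {A B D R : ObjectProperty.FullSubcategory P} {f : A ⟶ B} {g : D ⟶ B}
    {p1 : R ⟶ A} {p2 : R ⟶ D} {h : p1 ≫ f = p2 ≫ g}
    (hl : IsLimit (PullbackCone.mk p1 p2 h))
    {Z : C} (a : Z ⟶ A.obj) (b : Z ⟶ D.obj)
    (hab : a ≫ f.hom = b ≫ g.hom) :
    ∃! l : Z ⟶ R.obj, l ≫ p1.hom = a ∧ l ≫ p2.hom = b := by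
  obtain ⟨a', ha⟩ := unit_factor a
  obtain ⟨b', hb⟩ := unit_factor b
  let η := (reflectorAdjunction (ObjectProperty.ι P)).unit.app Z
  have ha : η ≫ a'.hom = a := ha
  have hb : η ≫ b'.hom = b := hb
  have hab' : a' ≫ f = b' ≫ g := by
    apply unit_cancel (P := P)
    have step : (η ≫ a'.hom) ≫ f.hom
        = (η ≫ b'.hom) ≫ g.hom := by rw [ha, hb]; exact hab
    exact ((Category.assoc _ _ _).symm.trans step).trans (Category.assoc _ _ _)
  obtain ⟨l', ⟨hl1, hl2⟩, hlu⟩ := pc_elements hl a' b' hab'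
  refine ⟨η ≫ l'.hom, ⟨?_, ?_⟩, ?_⟩
  · calc (η ≫ l'.hom) ≫ p1.hom
        = η ≫ (l' ≫ p1).hom := Category.assoc _ _ _
      _ = a := by rw [show (l' ≫ p1 : _ ⟶ A) = a' from hl1]; exact ha
  · calc (η ≫ l'.hom) ≫ p2.hom
        = η ≫ (l' ≫ p2).hom := Category.assoc _ _ _
      _ = b := by rw [show (l' ≫ p2 : _ ⟶ D) = b' from hl2]; exact hb
  · rintro m ⟨hm1, hm2⟩
    obtain ⟨m', hm⟩ := unit_factor (P := P) m
    have hm : η ≫ m'.hom = m := hm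
    have em1 : m' ≫ p1 = a' := by
      apply unit_cancel (P := P)
      have step : (η ≫ m'.hom) ≫ p1.hom
          = η ≫ a'.hom := by rw [hm, hm1, ← ha]
      exact (Category.assoc _ _ _).symm.trans step
    have em2 : m' ≫ p2 = b' := by
      apply unit_cancel (P := P)
      have step : (η ≫ m'.hom) ≫ p2.hom
          = η ≫ b'.hom := by rw [hm, hm2, ← hb]
      exact (Category.assoc _ _ _).symm.trans step
    rw [← hm, hlu m' ⟨em1, em2⟩]

/-- A limit pullback cone in the full subcategory maps to a limit pullback cone in `C`. -/
noncomputable def pbUp {A B D R : ObjectProperty.FullSubcategory P} {f : A ⟶ B} {g : D ⟶ B}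
    {p1 : R ⟶ A} {p2 : R ⟶ D} {h : p1 ≫ f = p2 ≫ g}
    (hl : IsLimit (PullbackCone.mk p1 p2 h)) :
    IsLimit (PullbackCone.mk ((ObjectProperty.ι P).map p1)
      ((ObjectProperty.ι P).map p2)
      (show (ObjectProperty.ι P).map p1 ≫ (ObjectProperty.ι P).map f
          = (ObjectProperty.ι P).map p2 ≫ (ObjectProperty.ι P).map g from (congrArg (fun t => t.hom) h))) :=
  pc_mk _ (fun a b hab => pb_elements_up hl a b hab)

/-- A pullback cone in the full subcategory that is a limit in `C` is a limit. -/
noncomputable def pbDown {A B D R : ObjectProperty.FullSubcategory P} {f : A ⟶ B} {g : D ⟶ B}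
    {p1 : R ⟶ A} {p2 : R ⟶ D} (h : p1 ≫ f = p2 ≫ g)
    (hl : IsLimit (PullbackCone.mk ((ObjectProperty.ι P).map p1)
      ((ObjectProperty.ι P).map p2)
      (show (ObjectProperty.ι P).map p1 ≫ (ObjectProperty.ι P).map f
          = (ObjectProperty.ι P).map p2 ≫ (ObjectProperty.ι P).map g from (congrArg (fun t => t.hom) h)))) :
    IsLimit (PullbackCone.mk p1 p2 h) :=
  pc_mk h (fun {Z} a b hab => by
    obtain ⟨l, ⟨h1, h2⟩, hu⟩ := pc_elements hl ((ObjectProperty.ι P).map a) ((ObjectProperty.ι P).map b) (congrArg (fun t => t.hom) hab)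
    exact ⟨ObjectProperty.homMk l, ⟨ObjectProperty.hom_ext _ h1, ObjectProperty.hom_ext _ h2⟩,
      fun m hm => ObjectProperty.hom_ext _ (hu m.hom ⟨congrArg (fun t => t.hom) hm.1, congrArg (fun t => t.hom) hm.2⟩)⟩)

/-- A cofork in the full subcategory that is a colimit in `C` is a colimit. -/
noncomputable def coforkDown {A B Q : ObjectProperty.FullSubcategory P} {f g : A ⟶ B} {π : B ⟶ Q}
    (w : f ≫ π = g ≫ π)
    (hc : IsColimit (Cofork.ofπ ((ObjectProperty.ι P).map π)
      (show (ObjectProperty.ι P).map f ≫ (ObjectProperty.ι P).map π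
          = (ObjectProperty.ι P).map g ≫ (ObjectProperty.ι P).map π from (congrArg (fun t => t.hom) w)))) :
    IsColimit (Cofork.ofπ π w) :=
  cofork_mk w (fun {Z} k hk => by
    obtain ⟨d, hd, hu⟩ := cofork_elements hc ((ObjectProperty.ι P).map k) (congrArg (fun t => t.hom) hk)
    exact ⟨ObjectProperty.homMk d, ObjectProperty.hom_ext _ hd,
      fun m hm => ObjectProperty.hom_ext _ (hu m.hom (congrArg (fun t => t.hom) hm))⟩)

/-- A regular epimorphism is the coequalizer of its kernel pair. -/
lemma kpCoeq {A B K : C} {f : A ⟶ B} (re : RegularEpi f) {k1 k2 : K ⟶ A}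
    {hk : k1 ≫ f = k2 ≫ f} (hl : IsLimit (PullbackCone.mk k1 k2 hk)) :
    Nonempty (IsColimit (Cofork.ofπ f hk)) := by
  constructor
  apply cofork_mk
  intro Z k hkk
  obtain ⟨l, ⟨hl1, hl2⟩, -⟩ := pc_elements hl re.left re.right re.w
  have hlr : re.left ≫ k = re.right ≫ k := by
    rw [← hl1, ← hl2, Category.assoc, Category.assoc, hkk]
  refine ⟨Cofork.IsColimit.desc re.isColimit k hlr, ?_, ?_⟩
  · simpa using Cofork.IsColimit.π_desc' re.isColimit k hlr
  · intro d hd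
    haveI : Epi f := RegularEpi.epi f re
    rw [← cancel_epi f, hd]
    simpa using (Cofork.IsColimit.π_desc' re.isColimit k hlr).symm

end Stmt6Aux

namespace Stmt6Aux

variable {P : C → Prop} [Reflective (ObjectProperty.ι P)]

/-- A regular epimorphism in a Birkhoff subcategory is a regular epimorphism in the
ambient regular category. -/
lemma regEpiUp [RegularCat C]
    (hquot : ∀ {A B : C} (f : A ⟶ B), Nonempty (RegularEpi f) → P A → P B)
    {A B : ObjectProperty.FullSubcategory P} (f : A ⟶ B) (re : RegularEpi f) :
    Nonempty (RegularEpi ((ObjectProperty.ι P).map f)) := by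
  haveI : HasFiniteLimits C := RegularCat.hasFiniteLimits
  have hcond : pullback.fst ((ObjectProperty.ι P).map f) ((ObjectProperty.ι P).map f) ≫ ((ObjectProperty.ι P).map f)
      = pullback.snd ((ObjectProperty.ι P).map f) ((ObjectProperty.ι P).map f) ≫ ((ObjectProperty.ι P).map f) := pullback.condition
  haveI : HasCoequalizer (pullback.fst ((ObjectProperty.ι P).map f) ((ObjectProperty.ι P).map f))
      (pullback.snd ((ObjectProperty.ι P).map f) ((ObjectProperty.ι P).map f)) :=
    RegularCat.hasCoeqOfKernelPair _ _ _ hcond ⟨pullbackIsPullback _ _⟩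
  have hQ : P (coequalizer (pullback.fst ((ObjectProperty.ι P).map f) ((ObjectProperty.ι P).map f))
      (pullback.snd ((ObjectProperty.ι P).map f) ((ObjectProperty.ι P).map f))) :=
    hquot (coequalizer.π (pullback.fst ((ObjectProperty.ι P).map f) ((ObjectProperty.ι P).map f)) (pullback.snd ((ObjectProperty.ι P).map f) ((ObjectProperty.ι P).map f))) ⟨coequalizerRegular _ _⟩ A.property
  have hqm : coequalizer.π (pullback.fst ((ObjectProperty.ι P).map f) ((ObjectProperty.ι P).map f))
      (pullback.snd ((ObjectProperty.ι P).map f) ((ObjectProperty.ι P).map f)) ≫ coequalizer.desc _ hcond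
      = ((ObjectProperty.ι P).map f) := coequalizer.π_desc _ _
  -- the pair of the regular-epi presentation is coequalized by `q`
  have h2 : ((ObjectProperty.ι P).map re.left) ≫ ((ObjectProperty.ι P).map f)
      = ((ObjectProperty.ι P).map re.right) ≫ ((ObjectProperty.ι P).map f) := congrArg (fun t => t.hom) re.w
  have huq : ((ObjectProperty.ι P).map re.left) ≫ coequalizer.π (pullback.fst ((ObjectProperty.ι P).map f) ((ObjectProperty.ι P).map f)) (pullback.snd ((ObjectProperty.ι P).map f) ((ObjectProperty.ι P).map f))
      = ((ObjectProperty.ι P).map re.right) ≫ coequalizer.π (pullback.fst ((ObjectProperty.ι P).map f) ((ObjectProperty.ι P).map f)) (pullback.snd ((ObjectProperty.ι P).map f) ((ObjectProperty.ι P).map f)) := by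
    have l1 := pullback.lift_fst ((ObjectProperty.ι P).map re.left)
      ((ObjectProperty.ι P).map re.right) h2
    have l2 := pullback.lift_snd ((ObjectProperty.ι P).map re.left)
      ((ObjectProperty.ι P).map re.right) h2
    calc ((ObjectProperty.ι P).map re.left) ≫ _
        = (pullback.lift ((ObjectProperty.ι P).map re.left)
            ((ObjectProperty.ι P).map re.right) h2
            ≫ pullback.fst ((ObjectProperty.ι P).map f)
              ((ObjectProperty.ι P).map f)) ≫ _ := by rw [l1]
      _ = pullback.lift ((ObjectProperty.ι P).map re.left)
            ((ObjectProperty.ι P).map re.right) h2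
            ≫ (pullback.fst ((ObjectProperty.ι P).map f)
              ((ObjectProperty.ι P).map f) ≫ _) := Category.assoc _ _ _
      _ = pullback.lift ((ObjectProperty.ι P).map re.left)
            ((ObjectProperty.ι P).map re.right) h2
            ≫ (pullback.snd ((ObjectProperty.ι P).map f)
              ((ObjectProperty.ι P).map f) ≫ _) := by rw [coequalizer.condition]
      _ = (pullback.lift ((ObjectProperty.ι P).map re.left)
            ((ObjectProperty.ι P).map re.right) h2
            ≫ pullback.snd ((ObjectProperty.ι P).map f)
              ((ObjectProperty.ι P).map f)) ≫ _ := (Category.assoc _ _ _).symm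
      _ = ((ObjectProperty.ι P).map re.right) ≫ _ := by rw [l2]
  -- descend along the colimit presentation of `f` in the subcategory
  let QX : ObjectProperty.FullSubcategory P := ⟨_, hQ⟩
  let qX : A ⟶ QX := ObjectProperty.homMk (coequalizer.π (pullback.fst ((ObjectProperty.ι P).map f) ((ObjectProperty.ι P).map f)) (pullback.snd ((ObjectProperty.ι P).map f) ((ObjectProperty.ι P).map f)))
  have huqX : re.left ≫ qX = re.right ≫ qX := ObjectProperty.hom_ext _ huq
  let m' : B ⟶ QX := Cofork.IsColimit.desc re.isColimit qX huqX
  have hfm' : f ≫ m' = qX := by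
    simpa using Cofork.IsColimit.π_desc' re.isColimit qX huqX
  have hfm'C : ((ObjectProperty.ι P).map f) ≫ ((ObjectProperty.ι P).map m') = qX.hom := congrArg (fun t => t.hom) hfm'
  have e_mm' : coequalizer.desc _ hcond ≫ ((ObjectProperty.ι P).map m') = 𝟙 QX.obj := by
    rw [← cancel_epi (coequalizer.π (pullback.fst ((ObjectProperty.ι P).map f) ((ObjectProperty.ι P).map f))
      (pullback.snd ((ObjectProperty.ι P).map f) ((ObjectProperty.ι P).map f))), ← Category.assoc, hqm, Category.comp_id]
    exact hfm'C
  have e_m'mX : m' ≫ (ObjectProperty.homMk (coequalizer.desc _ hcond) : QX ⟶ B) = 𝟙 B := by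
    apply Cofork.IsColimit.hom_ext re.isColimit
    have : f ≫ m' ≫ (ObjectProperty.homMk (coequalizer.desc _ hcond) : QX ⟶ B) = f := by
      rw [← Category.assoc, hfm']
      exact ObjectProperty.hom_ext _ hqm
    simpa using this.trans (Category.comp_id f).symm
  have e_m'm : ((ObjectProperty.ι P).map m') ≫ coequalizer.desc _ hcond = 𝟙 ((ObjectProperty.ι P).obj B) := congrArg (fun t => t.hom) e_m'mX
  constructor
  refine { W := pullback ((ObjectProperty.ι P).map f) ((ObjectProperty.ι P).map f), left := pullback.fst _ _,
           right := pullback.snd _ _, w := hcond, isColimit := ?_ }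
  apply cofork_mk
  intro Z k hkk
  refine ⟨((ObjectProperty.ι P).map m') ≫ coequalizer.desc k hkk, ?_, ?_⟩
  · show (ObjectProperty.ι P).map f ≫ ((ObjectProperty.ι P).map m' ≫ coequalizer.desc k hkk) = k
    rw [← Category.assoc, hfm'C]
    exact coequalizer.π_desc k hkk
  · intro d hd
    have hmd : coequalizer.desc _ hcond ≫ d = coequalizer.desc k hkk := by
      apply coequalizer.hom_ext
      rw [← Category.assoc, hqm, hd, coequalizer.π_desc]
    rw [← Category.id_comp d, ← e_m'm, Category.assoc, hmd]

/-- A regular epimorphism of the ambient category lying in the subcategory is a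
regular epimorphism there. -/
lemma regEpiDown [HasFiniteLimits (ObjectProperty.FullSubcategory P)]
    {A B : ObjectProperty.FullSubcategory P} (f : A ⟶ B)
    (re : Nonempty (RegularEpi ((ObjectProperty.ι P).map f))) : Nonempty (RegularEpi f) := by
  obtain ⟨re⟩ := re
  have hk : pullback.fst f f ≫ f = pullback.snd f f ≫ f := pullback.condition
  have hlC := pbUp (h := hk) (pullbackIsPullback f f)
  obtain ⟨hco⟩ := kpCoeq re hlC
  exact ⟨{ W := pullback f f, left := pullback.fst f f, right := pullback.snd f f,
           w := hk, isColimit := coforkDown hk hco }⟩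

end Stmt6Aux

/-- A Birkhoff subcategory of an exact category is exact. -/
theorem stmt6 {C : Type u} [Category.{v} C] [ExactCat C]
    (P : C → Prop) [Reflective (ObjectProperty.ι P)]
    (hrep : ∀ {A B : C}, P A → (A ≅ B) → P B)
    (hsub : ∀ {A B : C} (f : A ⟶ B), Mono f → P B → P A)
    (hquot : ∀ {A B : C} (f : A ⟶ B), Nonempty (RegularEpi f) → P A → P B) :
    ExactCat (ObjectProperty.FullSubcategory P) := by
  haveI hFLC : HasFiniteLimits C := RegularCat.hasFiniteLimits
  haveI hFLX : HasFiniteLimits (ObjectProperty.FullSubcategory P) :=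
    ⟨fun J _ _ => hasLimitsOfShape_of_reflective (ObjectProperty.ι P)⟩
  refine { hasFiniteLimits := hFLX, hasCoeqOfKernelPair := ?_, regEpiStable := ?_,
           effective := ?_ }
  · -- coequalizers of kernel pairs
    intro A B R f p1 p2 h hl
    obtain ⟨hl⟩ := hl
    have hlC := Stmt6Aux.pbUp hl
    haveI : HasCoequalizer ((ObjectProperty.ι P).map p1)
        ((ObjectProperty.ι P).map p2) :=
      RegularCat.hasCoeqOfKernelPair ((ObjectProperty.ι P).map f)
        ((ObjectProperty.ι P).map p1) ((ObjectProperty.ι P).map p2) (congrArg (fun t => t.hom) h) ⟨hlC⟩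
    have hQ : P (coequalizer ((ObjectProperty.ι P).map p1)
        ((ObjectProperty.ι P).map p2)) :=
      hquot (coequalizer.π ((ObjectProperty.ι P).map p1)
        ((ObjectProperty.ι P).map p2)) ⟨coequalizerRegular _ _⟩ A.property
    let QX : ObjectProperty.FullSubcategory P := ⟨_, hQ⟩
    let qX : A ⟶ QX := ObjectProperty.homMk (coequalizer.π ((ObjectProperty.ι P).map p1)
      ((ObjectProperty.ι P).map p2))
    have wX : p1 ≫ qX = p2 ≫ qX :=
      ObjectProperty.hom_ext _ (coequalizer.condition ((ObjectProperty.ι P).map p1)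
        ((ObjectProperty.ι P).map p2))
    have hcoX := Stmt6Aux.coforkDown wX
      (coequalizerIsCoequalizer ((ObjectProperty.ι P).map p1)
        ((ObjectProperty.ι P).map p2))
    exact HasColimit.mk ⟨_, hcoX⟩
  · -- pullback stability of regular epimorphisms
    intro Pb A B Z f g p1 p2 h hl hre
    obtain ⟨hl⟩ := hl
    obtain ⟨re⟩ := hre
    have hlC := Stmt6Aux.pbUp hl
    have hreC := Stmt6Aux.regEpiUp hquot f re
    obtain ⟨reC⟩ := hreC
    have hst := RegularCat.regEpiStable ((ObjectProperty.ι P).map f)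
      ((ObjectProperty.ι P).map g) ((ObjectProperty.ι P).map p1)
      ((ObjectProperty.ι P).map p2) (congrArg (fun t => t.hom) h) ⟨hlC⟩ ⟨reC⟩
    exact Stmt6Aux.regEpiDown p2 hst
  · -- effectivity of equivalence relations
    intro A ρ hρ
    obtain ⟨⟨δ, hδ1, hδ2⟩, ⟨σ, hσ1, hσ2⟩, htrans⟩ := hρ
    -- data for transitivity transfer: pullback of r2 and r1 in the subcategory
    have hpbX := pullbackIsPullback ρ.r2 ρ.r1
    obtain ⟨τ, hτ1, hτ2⟩ := htrans (pullback.fst ρ.r2 ρ.r1) (pullback.snd ρ.r2 ρ.r1)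
      pullback.condition
    have hpbC := Stmt6Aux.pbUp (h := pullback.condition) hpbX
    -- the underlying relation in C
    let ρC : RelOn ((ObjectProperty.ι P).obj A) :=
      { R := (ObjectProperty.ι P).obj ρ.R
        r1 := (ObjectProperty.ι P).map ρ.r1
        r2 := (ObjectProperty.ι P).map ρ.r2
        jmono := by
          intro Zc u v h1 h2
          obtain ⟨u', hu⟩ := Stmt6Aux.unit_factor (P := P) u
          obtain ⟨v', hv⟩ := Stmt6Aux.unit_factor (P := P) v
          let η := (reflectorAdjunction (ObjectProperty.ι P)).unit.app Zc
          have hu : η ≫ u'.hom = u := hu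
          have hv : η ≫ v'.hom = v := hv
          have e1 : u' ≫ ρ.r1 = v' ≫ ρ.r1 := by
            apply Stmt6Aux.unit_cancel (P := P)
            have step : (η ≫ u'.hom) ≫ (ObjectProperty.ι P).map ρ.r1
                = (η ≫ v'.hom) ≫ (ObjectProperty.ι P).map ρ.r1 := by
              rw [hu, hv]; exact h1
            exact ((Category.assoc _ _ _).symm.trans step).trans (Category.assoc _ _ _)
          have e2 : u' ≫ ρ.r2 = v' ≫ ρ.r2 := by
            apply Stmt6Aux.unit_cancel (P := P)
            have step : (η ≫ u'.hom) ≫ (ObjectProperty.ι P).map ρ.r2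
                = (η ≫ v'.hom) ≫ (ObjectProperty.ι P).map ρ.r2 := by
              rw [hu, hv]; exact h2
            exact ((Category.assoc _ _ _).symm.trans step).trans (Category.assoc _ _ _)
          rw [← hu, ← hv, ρ.jmono u' v' e1 e2] }
    -- ρC is an equivalence relation in C
    have hρC : ρC.IsEquivalence := by
      refine ⟨⟨(ObjectProperty.ι P).map δ, congrArg (fun t => t.hom) hδ1, congrArg (fun t => t.hom) hδ2⟩,
        ⟨(ObjectProperty.ι P).map σ, congrArg (fun t => t.hom) hσ1, congrArg (fun t => t.hom) hσ2⟩, ?_⟩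
      intro Zc a b hab
      obtain ⟨l, ⟨hl1, hl2⟩, -⟩ := Stmt6Aux.pc_elements hpbC a b hab
      refine ⟨l ≫ (ObjectProperty.ι P).map τ, ?_, ?_⟩
      · have s : l ≫ (τ ≫ ρ.r1).hom
            = l ≫ (pullback.fst ρ.r2 ρ.r1 ≫ ρ.r1).hom := by rw [hτ1]
        exact (Category.assoc _ _ _).trans (s.trans ((Category.assoc _ _ _).symm.trans
          (congrArg (fun t => t ≫ (ObjectProperty.ι P).map ρ.r1) hl1)))
      · have s : l ≫ (τ ≫ ρ.r2).hom
            = l ≫ (pullback.snd ρ.r2 ρ.r1 ≫ ρ.r2).hom := by rw [hτ2]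
        exact (Category.assoc _ _ _).trans (s.trans ((Category.assoc _ _ _).symm.trans
          (congrArg (fun t => t ≫ (ObjectProperty.ι P).map ρ.r2) hl2)))
    -- C-effectivity, then replace the quotient map by the coequalizer of the kernel pair
    obtain ⟨Y, fY, hfY, ⟨hlY⟩⟩ := ExactCat.effective ρC hρC
    haveI : HasCoequalizer ρC.r1 ρC.r2 :=
      RegularCat.hasCoeqOfKernelPair fY ρC.r1 ρC.r2 hfY ⟨hlY⟩
    have hQ : P (coequalizer ρC.r1 ρC.r2) :=
      hquot (coequalizer.π ρC.r1 ρC.r2) ⟨coequalizerRegular _ _⟩ A.property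
    have hq : ρC.r1 ≫ coequalizer.π ρC.r1 ρC.r2 = ρC.r2 ≫ coequalizer.π ρC.r1 ρC.r2 :=
      coequalizer.condition _ _
    have hlq : IsLimit (PullbackCone.mk ρC.r1 ρC.r2 hq) := by
      apply Stmt6Aux.pc_mk
      intro Zc a b hab
      have hab' : a ≫ fY = b ≫ fY := by
        have hm : coequalizer.π ρC.r1 ρC.r2 ≫ coequalizer.desc fY hfY = fY :=
          coequalizer.π_desc _ _
        rw [← hm, ← Category.assoc, ← Category.assoc, hab]
      exact Stmt6Aux.pc_elements hlY a b hab'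
    let QX : ObjectProperty.FullSubcategory P := ⟨_, hQ⟩
    let qX : A ⟶ QX := ObjectProperty.homMk (coequalizer.π ρC.r1 ρC.r2)
    have hqX : ρ.r1 ≫ qX = ρ.r2 ≫ qX := ObjectProperty.hom_ext _ hq
    exact ⟨QX, qX, hqX, ⟨Stmt6Aux.pbDown hqX hlq⟩⟩
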